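/- Suppose a choice correspondence c over finite nonempty sets of dated payments admits a PBDU representation. Then the following are equivalent: (1) c satisfies WARP over 𝒜; (2) c satisfies Stationarity over 𝒜; (3) c admits an exponential discounting utility representation; (4) c admits a utility representation. -/

import Mathlib

set_option maxHeartbeats 1000000


noncomputable section

/-- Dated payments: a payment `x ∈ [a,b]` arriving at time `t ∈ [0,t̄]`. -/
abbrev TAlt (a b tb : ℝ) : Type :=
  {z : ℝ × ℝ // z.1 ∈ Set.Icc a b ∧ z.2 ∈ Set.Icc 0 tb}

variable {a b tb : ℝ}

/-- `c` satisfies WARP over a collection `S` of choice problems. -/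
def WARPover (c : Finset (TAlt a b tb) → Finset (TAlt a b tb))
    (S : Set (Finset (TAlt a b tb))) : Prop :=
  ∀ A ∈ S, ∀ B ∈ S, B ⊆ A → (c A ∩ B).Nonempty → c A ∩ B = c B

/-- `c` satisfies Stationarity over a collection `S` of choice problems. -/
def StatOver (c : Finset (TAlt a b tb) → Finset (TAlt a b tb))
    (S : Set (Finset (TAlt a b tb))) : Prop :=
  ∀ A ∈ S, ∀ B ∈ S, ∀ d : ℝ, 0 < d →
    ∀ xt yq xtd yqd : TAlt a b tb,
      xtd.1.1 = xt.1.1 → xtd.1.2 = xt.1.2 + d →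
      yqd.1.1 = yq.1.1 → yqd.1.2 = yq.1.2 + d →
      xt ∈ c A → yq ∈ A → yqd ∈ c B → xtd ∈ B → xtd ∈ c B

/-- The set of earliest payments in `A`. -/
def PsiT (A : Finset (TAlt a b tb)) : Set (TAlt a b tb) :=
  {z : TAlt a b tb | z ∈ A ∧ ∀ z' ∈ A, z.1.2 ≤ z'.1.2}

/-- Time Reference Dependence: WARP and Stationarity hold between any two choice
problems sharing an earliest payment. -/
def TimeRefDep (c : Finset (TAlt a b tb) → Finset (TAlt a b tb)) : Prop :=
  ∀ A B : Finset (TAlt a b tb), A.Nonempty → B.Nonempty →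
    (PsiT A ∩ PsiT B).Nonempty →
    WARPover c {A, B} ∧ StatOver c {A, B}

/-- Outcome Monotonicity: a larger payment at the same time is chosen. -/
def OutMono (c : Finset (TAlt a b tb) → Finset (TAlt a b tb)) : Prop :=
  ∀ z z' : TAlt a b tb, z.1.2 = z'.1.2 → z'.1.1 < z.1.1 → c {z, z'} = {z}

/-- Impatience: the same payment arriving sooner is chosen. -/
def Impatience (c : Finset (TAlt a b tb) → Finset (TAlt a b tb)) : Prop :=
  ∀ z z' : TAlt a b tb, z.1.1 = z'.1.1 → z.1.2 < z'.1.2 → c {z, z'} = {z}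

/-- Present Bias axiom. -/
def PresentBias (c : Finset (TAlt a b tb) → Finset (TAlt a b tb)) : Prop :=
  (∀ (z1 z3 w1 w3 : TAlt a b tb) (d : ℝ), 0 < d →
    z1.1.2 < z3.1.2 →
    w1.1.1 = z1.1.1 → w1.1.2 = z1.1.2 + d →
    w3.1.1 = z3.1.1 → w3.1.2 = z3.1.2 + d →
    c {z1, z3} = {z3} → c {w1, w3} = {w3}) ∧
  (∀ (z1 z2 z3 w1 w2 w3 : TAlt a b tb) (lam d : ℝ), 0 < lam → lam < 1 →
    z1.1.2 < z2.1.2 → z2.1.2 < z3.1.2 →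
    w1.1.1 = z1.1.1 → w1.1.2 = lam * z1.1.2 + d →
    w2.1.1 = z2.1.1 → w2.1.2 = lam * z2.1.2 + d →
    w3.1.1 = z3.1.1 → w3.1.2 = lam * z3.1.2 + d →
    c {z1, z2, z3} = {z1, z2, z3} →
    w1 ∈ c {w1, w2, w3} → w3 ∈ c {w1, w2, w3} → w2 ∈ c {w1, w2, w3})

/-- Continuity: `c` has a closed graph w.r.t. the Hausdorff distance. -/
def ClosedGraphC (c : Finset (TAlt a b tb) → Finset (TAlt a b tb)) : Prop :=
  ∀ (x : TAlt a b tb) (xs : ℕ → TAlt a b tb) (A : Finset (TAlt a b tb))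
    (As : ℕ → Finset (TAlt a b tb)),
    A.Nonempty → (∀ n, (As n).Nonempty) →
    Filter.Tendsto xs Filter.atTop (nhds x) →
    Filter.Tendsto
      (fun n => Metric.hausdorffDist ((As n : Set (TAlt a b tb))) (A : Set (TAlt a b tb)))
      Filter.atTop (nhds 0) →
    (∀ n, xs n ∈ c (As n)) → x ∈ c A

/-- `c` admits a PBDU representation with data `(u, δ, r)`. -/
def IsPBDU (a b tb : ℝ) (c : Finset (TAlt a b tb) → Finset (TAlt a b tb))
    (u : ℝ → ℝ) (δ : ℝ → ℝ) (r : Finset (TAlt a b tb) → ℝ) : Prop :=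
  StrictMonoOn u (Set.Icc a b) ∧ ContinuousOn u (Set.Icc a b) ∧
  (∀ x ∈ Set.Icc a b, 0 < u x) ∧
  (∀ t ∈ Set.Icc (0 : ℝ) tb, δ t ∈ Set.Ioo (0 : ℝ) 1) ∧
  (∀ t t' : ℝ, t ∈ Set.Icc (0 : ℝ) tb → t' ∈ Set.Icc (0 : ℝ) tb → t < t' → δ t ≤ δ t') ∧
  (∀ A : Finset (TAlt a b tb), A.Nonempty →
    (∃ z ∈ A, z.1.2 = r A) ∧ ∀ z ∈ A, r A ≤ z.1.2) ∧
  (∀ A : Finset (TAlt a b tb), A.Nonempty → ∀ z : TAlt a b tb,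
    z ∈ c A ↔ z ∈ A ∧ ∀ z' ∈ A,
      δ (r A) ^ z'.1.2 * u z'.1.1 ≤ δ (r A) ^ z.1.2 * u z.1.1) ∧
  ClosedGraphC c

/-- The alternative `(a, 0)`. -/
def altA0 (a b tb : ℝ) (hab : a ≤ b) (htb : 0 ≤ tb) : TAlt a b tb :=
  ⟨(a, 0), Set.mem_Icc.mpr ⟨le_rfl, hab⟩, Set.mem_Icc.mpr ⟨le_rfl, htb⟩⟩

/-- The alternative `(b, t̄)`. -/
def altBT (a b tb : ℝ) (hab : a ≤ b) (htb : 0 ≤ tb) : TAlt a b tb :=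
  ⟨(b, tb), Set.mem_Icc.mpr ⟨hab, le_rfl⟩, Set.mem_Icc.mpr ⟨htb, le_rfl⟩⟩

/-- Proposition 3: given a PBDU representation, WARP, Stationarity,
exponential discounting utility representation, and utility representation are all
equivalent. -/
theorem stmt6 (a b tb : ℝ) (ha : 0 < a) (hab : a < b) (htb : 0 < tb)
    (c : Finset (TAlt a b tb) → Finset (TAlt a b tb))
    (hc : ∀ A : Finset (TAlt a b tb), A.Nonempty → c A ⊆ A ∧ (c A).Nonempty)
    (hbase : altBT a b tb hab.le htb.le ∈
      c {altA0 a b tb hab.le htb.le, altBT a b tb hab.le htb.le})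
    (u : ℝ → ℝ) (δ : ℝ → ℝ) (r : Finset (TAlt a b tb) → ℝ)
    (hrep : IsPBDU a b tb c u δ r) :
    List.TFAE
      [WARPover c {A : Finset (TAlt a b tb) | A.Nonempty},
       StatOver c {A : Finset (TAlt a b tb) | A.Nonempty},
       ∃ (δ0 : ℝ) (u0 : ℝ → ℝ), δ0 ∈ Set.Ioo (0 : ℝ) 1 ∧
         StrictMonoOn u0 (Set.Icc a b) ∧ ContinuousOn u0 (Set.Icc a b) ∧
         (∀ x ∈ Set.Icc a b, 0 < u0 x) ∧
         ∀ A : Finset (TAlt a b tb), A.Nonempty → ∀ z : TAlt a b tb,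
           z ∈ c A ↔ z ∈ A ∧ ∀ z' ∈ A,
             δ0 ^ z'.1.2 * u0 z'.1.1 ≤ δ0 ^ z.1.2 * u0 z.1.1,
       ∃ U : TAlt a b tb → ℝ, ∀ A : Finset (TAlt a b tb), A.Nonempty →
         ∀ z : TAlt a b tb, z ∈ c A ↔ z ∈ A ∧ ∀ z' ∈ A, U z' ≤ U z] := by

  obtain ⟨humono, hucont, hupos, hδmem, hδmono, hrmin, hchoice, -⟩ := hrep
  have hP := hδmem 0 ⟨le_rfl, htb.le⟩
  have hub : 0 < u b := hupos b ⟨hab.le, le_rfl⟩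
  have hua : 0 < u a := hupos a ⟨le_rfl, hab.le⟩
  set w0 : TAlt a b tb := altA0 a b tb hab.le htb.le with hw0def
  set w2 : TAlt a b tb := altBT a b tb hab.le htb.le with hw2def
  -- base inequality from hbase : u a ≤ δ 0 ^ tb * u b
  have hbase' : u a ≤ δ 0 ^ (tb : ℝ) * u b := by
    have hA0 : ({w0, w2} : Finset (TAlt a b tb)).Nonempty :=
      ⟨w0, Finset.mem_insert_self _ _⟩
    have hr0 : r {w0, w2} = 0 := by
      obtain ⟨⟨z, hz, hzt⟩, hle⟩ := hrmin _ hA0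
      have h1 : r {w0, w2} ≤ w0.1.2 := hle w0 (Finset.mem_insert_self _ _)
      have h2 : (0 : ℝ) ≤ z.1.2 := z.2.2.1
      have hw0t : w0.1.2 = 0 := rfl
      rw [hw0t] at h1
      linarith [hzt ▸ h2]
    have hkey := ((hchoice _ hA0 w2).mp hbase).2 w0 (Finset.mem_insert_self _ _)
    rw [hr0] at hkey
    have hw0x : w0.1.1 = a := rfl
    have hw0t : w0.1.2 = 0 := rfl
    have hw2x : w2.1.1 = b := rfl
    have hw2t : w2.1.2 = tb := rfl
    rw [hw0x, hw0t, hw2x, hw2t, Real.rpow_zero, one_mul] at hkey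
    exact hkey
  -- Part A: if δ is constant on [0, tb), exponential representation holds
  have hexp_of : (∀ t, 0 ≤ t → t < tb → δ t = δ 0) →
      ∃ (δ0 : ℝ) (u0 : ℝ → ℝ), δ0 ∈ Set.Ioo (0 : ℝ) 1 ∧
        StrictMonoOn u0 (Set.Icc a b) ∧ ContinuousOn u0 (Set.Icc a b) ∧
        (∀ x ∈ Set.Icc a b, 0 < u0 x) ∧
        ∀ A : Finset (TAlt a b tb), A.Nonempty → ∀ z : TAlt a b tb,
          z ∈ c A ↔ z ∈ A ∧ ∀ z' ∈ A,
            δ0 ^ z'.1.2 * u0 z'.1.1 ≤ δ0 ^ z.1.2 * u0 z.1.1 := by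
    intro h
    refine ⟨δ 0, u, hP, humono, hucont, hupos, ?_⟩
    intro A hA z
    obtain ⟨⟨z0, hz0, hz0t⟩, hle⟩ := hrmin A hA
    have hr0 : 0 ≤ r A := hz0t ▸ z0.2.2.1
    have hrtb : r A ≤ tb := hz0t ▸ z0.2.2.2
    rcases lt_or_eq_of_le hrtb with hlt | heq
    · have hthis := hchoice A hA z
      rwa [h (r A) hr0 hlt] at hthis
    · -- every alternative in A arrives at time tb
      have htimes : ∀ w : TAlt a b tb, w ∈ A → w.1.2 = tb := by
        intro w hw
        have h1 := hle w hw
        rw [heq] at h1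
        have h2 := w.2.2.2
        linarith
      have hpos1 : (0:ℝ) < δ tb ^ (tb:ℝ) :=
        Real.rpow_pos_of_pos (hδmem tb ⟨htb.le, le_rfl⟩).1 _
      have hpos2 : (0:ℝ) < δ 0 ^ (tb:ℝ) := Real.rpow_pos_of_pos hP.1 _
      rw [hchoice A hA z]
      constructor
      · rintro ⟨hzA, hmax⟩
        refine ⟨hzA, fun z' hz' => ?_⟩
        have h1 := hmax z' hz'
        rw [heq, htimes z hzA, htimes z' hz'] at h1
        rw [htimes z hzA, htimes z' hz']
        exact (mul_le_mul_iff_right₀ hpos2).mpr ((mul_le_mul_iff_right₀ hpos1).mp h1)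
      · rintro ⟨hzA, hmax⟩
        refine ⟨hzA, fun z' hz' => ?_⟩
        have h1 := hmax z' hz'
        rw [htimes z hzA, htimes z' hz'] at h1
        rw [heq, htimes z hzA, htimes z' hz']
        exact (mul_le_mul_iff_right₀ hpos1).mpr ((mul_le_mul_iff_right₀ hpos2).mp h1)
  -- Part B: if δ is not constant on [0, tb), both WARP and Stationarity fail
  have hcontradict : (¬ ∀ t, 0 ≤ t → t < tb → δ t = δ 0) →
      ¬ WARPover c {A : Finset (TAlt a b tb) | A.Nonempty} ∧
      ¬ StatOver c {A : Finset (TAlt a b tb) | A.Nonempty} := by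
    intro hnc
    push_neg at hnc
    obtain ⟨d, hd0, hdtb, hne⟩ := hnc
    have hd0' : 0 < d := by
      rcases eq_or_lt_of_le hd0 with h | h
      · exact absurd (h ▸ rfl) hne
      · exact h
    have hdδ : δ 0 < δ d :=
      lt_of_le_of_ne (hδmono 0 d ⟨le_rfl, htb.le⟩ ⟨hd0, hdtb.le⟩ hd0') (Ne.symm hne)
    have hK := hδmem d ⟨hd0, hdtb.le⟩
    set q : ℝ := tb - d with hqdef
    have hq0 : 0 < q := by simp only [hqdef]; linarith
    have hqtb : q ≤ tb := by simp only [hqdef]; linarith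
    -- find x1 with δ0^q * u b < u x1 < δd^q * u b
    have hpow : δ 0 ^ q < δ d ^ q := Real.rpow_lt_rpow hP.1.le hdδ hq0
    set v : ℝ := ((δ 0 ^ q + δ d ^ q) / 2) * u b with hvdef
    have hv1 : δ 0 ^ q * u b < v := by rw [hvdef]; nlinarith
    have hv2 : v < δ d ^ q * u b := by rw [hvdef]; nlinarith
    have hqle : δ 0 ^ (tb:ℝ) ≤ δ 0 ^ q :=
      Real.rpow_le_rpow_of_exponent_ge hP.1 hP.2.le hqtb
    have hva : u a ≤ δ 0 ^ q * u b := le_trans hbase' (by nlinarith)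
    have hdq1 : δ d ^ q ≤ 1 := Real.rpow_le_one hK.1.le hK.2.le hq0.le
    have hvb : v ≤ u b := by nlinarith
    obtain ⟨x1, hx1, hux1⟩ :=
      intermediate_value_Icc hab.le hucont (Set.mem_Icc.mpr ⟨by linarith, hvb⟩)
    have hx1lo : δ 0 ^ q * u b < u x1 := by rw [hux1]; exact hv1
    have hx1hi : u x1 < δ d ^ q * u b := by rw [hux1]; exact hv2
    -- rpow splitting facts
    have hsplit0 : δ 0 ^ (tb:ℝ) = δ 0 ^ d * δ 0 ^ q := by
      rw [← Real.rpow_add hP.1]; congr 1; simp [hqdef]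
    have hsplitd : δ d ^ (tb:ℝ) = δ d ^ d * δ d ^ q := by
      rw [← Real.rpow_add hK.1]; congr 1; simp [hqdef]
    have hp0d : (0:ℝ) < δ 0 ^ d := Real.rpow_pos_of_pos hP.1 _
    have hpdd : (0:ℝ) < δ d ^ d := Real.rpow_pos_of_pos hK.1 _
    -- the alternatives
    set w1 : TAlt a b tb := ⟨(x1, d), hx1, Set.mem_Icc.mpr ⟨hd0, hdtb.le⟩⟩ with hw1def
    set B : Finset (TAlt a b tb) := {w1, w2} with hBdef
    have hw1B : w1 ∈ B := Finset.mem_insert_self _ _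
    have hw2B : w2 ∈ B := Finset.mem_insert_of_mem (Finset.mem_singleton_self _)
    have hBne : B.Nonempty := ⟨w1, hw1B⟩
    have hrB : r B = d := by
      obtain ⟨⟨z, hz, hzt⟩, hle⟩ := hrmin B hBne
      have h1 : r B ≤ d := hle w1 hw1B
      have h2 : d ≤ z.1.2 := by
        rcases Finset.mem_insert.mp hz with rfl | hz'
        · exact le_rfl
        · rw [Finset.mem_singleton.mp hz']
          exact hdtb.le
      linarith [hzt ▸ h2]
    have hw1x : w1.1.1 = x1 := rfl
    have hw1t : w1.1.2 = d := rfl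
    have hw2x : w2.1.1 = b := rfl
    have hw2t : w2.1.2 = tb := rfl
    -- w1 is not chosen from B
    have hw1not : w1 ∉ c B := by
      intro hmem
      have hk := ((hchoice B hBne w1).mp hmem).2 w2 hw2B
      rw [hrB, hw1x, hw1t, hw2x, hw2t, hsplitd] at hk
      nlinarith
    -- w2 is chosen from B
    have hw2c : w2 ∈ c B := by
      rw [hchoice B hBne w2]
      refine ⟨hw2B, fun z' hz' => ?_⟩
      rcases Finset.mem_insert.mp hz' with rfl | hz'
      · rw [hrB, hw1x, hw1t, hw2x, hw2t, hsplitd]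
        nlinarith
      · rw [Finset.mem_singleton.mp hz']
    constructor
    · -- WARP fails
      intro hW
      set A3 : Finset (TAlt a b tb) := {w0, w1, w2} with hA3def
      have hw0A : w0 ∈ A3 := Finset.mem_insert_self _ _
      have hw1A : w1 ∈ A3 := Finset.mem_insert_of_mem (Finset.mem_insert_self _ _)
      have hw2A : w2 ∈ A3 :=
        Finset.mem_insert_of_mem (Finset.mem_insert_of_mem (Finset.mem_singleton_self _))
      have hA3ne : A3.Nonempty := ⟨w0, hw0A⟩
      have hrA3 : r A3 = 0 := by
        obtain ⟨⟨z, hz, hzt⟩, hle⟩ := hrmin A3 hA3ne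
        have h1 : r A3 ≤ w0.1.2 := hle w0 hw0A
        have h2 : (0:ℝ) ≤ z.1.2 := z.2.2.1
        have hw0t : w0.1.2 = 0 := rfl
        rw [hw0t] at h1
        linarith [hzt ▸ h2]
      have hw0x : w0.1.1 = a := rfl
      have hw0t : w0.1.2 = 0 := rfl
      have hw1cA : w1 ∈ c A3 := by
        rw [hchoice A3 hA3ne w1]
        refine ⟨hw1A, fun z' hz' => ?_⟩
        rcases Finset.mem_insert.mp hz' with rfl | hz'
        · rw [hrA3, hw0x, hw0t, hw1x, hw1t, Real.rpow_zero, one_mul]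
          calc u a ≤ δ 0 ^ (tb:ℝ) * u b := hbase'
            _ = δ 0 ^ d * (δ 0 ^ q * u b) := by rw [hsplit0]; ring
            _ ≤ δ 0 ^ d * u x1 := by nlinarith
        rcases Finset.mem_insert.mp hz' with rfl | hz'
        · exact le_rfl
        · rw [Finset.mem_singleton.mp hz', hrA3, hw1x, hw1t, hw2x, hw2t, hsplit0]
          nlinarith
      have hBsub : B ⊆ A3 := by
        intro z hz
        rcases Finset.mem_insert.mp hz with rfl | hz'
        · exact hw1A
        · rw [Finset.mem_singleton.mp hz']; exact hw2A
      have heq := hW A3 hA3ne B hBne hBsub ⟨w1, Finset.mem_inter.mpr ⟨hw1cA, hw1B⟩⟩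
      have : w1 ∈ c B := heq ▸ Finset.mem_inter.mpr ⟨hw1cA, hw1B⟩
      exact hw1not this
    · -- Stationarity fails
      intro hS
      set xt : TAlt a b tb :=
        ⟨(x1, 0), hx1, Set.mem_Icc.mpr ⟨le_rfl, htb.le⟩⟩ with hxtdef
      set yq : TAlt a b tb :=
        ⟨(b, q), Set.mem_Icc.mpr ⟨hab.le, le_rfl⟩, Set.mem_Icc.mpr ⟨hq0.le, hqtb⟩⟩ with hyqdef
      set A2 : Finset (TAlt a b tb) := {xt, yq} with hA2def
      have hxtA : xt ∈ A2 := Finset.mem_insert_self _ _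
      have hyqA : yq ∈ A2 := Finset.mem_insert_of_mem (Finset.mem_singleton_self _)
      have hA2ne : A2.Nonempty := ⟨xt, hxtA⟩
      have hxtx : xt.1.1 = x1 := rfl
      have hxtt : xt.1.2 = 0 := rfl
      have hyqx : yq.1.1 = b := rfl
      have hyqt : yq.1.2 = q := rfl
      have hrA2 : r A2 = 0 := by
        obtain ⟨⟨z, hz, hzt⟩, hle⟩ := hrmin A2 hA2ne
        have h1 : r A2 ≤ xt.1.2 := hle xt hxtA
        have h2 : (0:ℝ) ≤ z.1.2 := z.2.2.1
        rw [hxtt] at h1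
        linarith [hzt ▸ h2]
      have hxtc : xt ∈ c A2 := by
        rw [hchoice A2 hA2ne xt]
        refine ⟨hxtA, fun z' hz' => ?_⟩
        rcases Finset.mem_insert.mp hz' with rfl | hz'
        · exact le_rfl
        · rw [Finset.mem_singleton.mp hz', hrA2, hxtx, hxtt, hyqx, hyqt,
            Real.rpow_zero, one_mul]
          exact hx1lo.le
      have hfinal : w1 ∈ c B := by
        refine hS A2 hA2ne B hBne d hd0' xt yq w1 w2 ?_ ?_ ?_ ?_ hxtc hyqA hw2c hw1B
        · rfl
        · show d = 0 + d
          rw [zero_add]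
        · rfl
        · show tb = q + d
          rw [hqdef]; ring
      exact hw1not hfinal
  -- Now assemble the TFAE
  tfae_have 3 → 4 := by
    rintro ⟨δ0, u0, h01, hmono, hcont, hpos, hU⟩
    exact ⟨fun z => δ0 ^ z.1.2 * u0 z.1.1, fun A hA z => hU A hA z⟩
  tfae_have 4 → 1 := by
    rintro ⟨U, hU⟩
    intro A hA B hB hBA hne
    have hA' : A.Nonempty := hA
    have hB' : B.Nonempty := hB
    ext z
    simp only [Finset.mem_inter]
    constructor
    · rintro ⟨hzcA, hzB⟩
      obtain ⟨hzA, hmax⟩ := (hU A hA' z).mp hzcA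
      exact (hU B hB' z).mpr ⟨hzB, fun z' hz' => hmax z' (hBA hz')⟩
    · intro hzcB
      obtain ⟨hzB, hmaxB⟩ := (hU B hB' z).mp hzcB
      obtain ⟨w, hw⟩ := hne
      obtain ⟨hwcA, hwB⟩ := Finset.mem_inter.mp hw
      obtain ⟨hwA, hmaxA⟩ := (hU A hA' w).mp hwcA
      have hzA : z ∈ A := hBA hzB
      refine ⟨(hU A hA' z).mpr ⟨hzA, fun z' hz' => ?_⟩, hzB⟩
      exact le_trans (hmaxA z' hz') (hmaxB w hwB)
  tfae_have 3 → 2 := by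
    rintro ⟨δ0, u0, h01, hmono, hcont, hpos, hU⟩
    intro A hA B hB d hd xt yq xtd yqd hx hxt hy hyt hxcA hyA hydcB hxdB
    have hA' : A.Nonempty := hA
    have hB' : B.Nonempty := hB
    obtain ⟨hxA, hmaxA⟩ := (hU A hA' xt).mp hxcA
    obtain ⟨hyB, hmaxB⟩ := (hU B hB' yqd).mp hydcB
    refine (hU B hB' xtd).mpr ⟨hxdB, fun z' hz' => ?_⟩
    have h1 := hmaxB z' hz'
    have h2 := hmaxA yq hyA
    have hd0 : (0:ℝ) < δ0 ^ d := Real.rpow_pos_of_pos h01.1 _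
    have key : δ0 ^ yqd.1.2 * u0 yqd.1.1 ≤ δ0 ^ xtd.1.2 * u0 xtd.1.1 := by
      rw [hx, hxt, hy, hyt, Real.rpow_add h01.1, Real.rpow_add h01.1]
      nlinarith
    exact le_trans h1 key
  tfae_have 1 → 3 := by
    intro hW
    by_cases hconst : ∀ t, 0 ≤ t → t < tb → δ t = δ 0
    · exact hexp_of hconst
    · exact absurd hW (hcontradict hconst).1
  tfae_have 2 → 3 := by
    intro hS
    by_cases hconst : ∀ t, 0 ≤ t → t < tb → δ t = δ 0
    · exact hexp_of hconst
    · exact absurd hS (hcontradict hconst).2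
  tfae_finish


end
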